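/- Let L be a graded Lie algebra over F_p with p ≠ 3, with grading L = L_1 ⊕ L_2 ⊕ L_3 ⊕ L_4 ⊕ ..., generated by L_1. If dim L_1 = 3 and dim L_3 = 1, then dim(L'' ∩ L_4) ≤ 2. -/

import Mathlib

open Submodule Module

/-- The bracket as a bilinear map. -/
noncomputable def brkt (R L : Type*) [CommRing R] [LieRing L] [LieAlgebra R L] :
    L →ₗ[R] Module.End R L := (LieModule.toEnd R L L : L →ₗ[R] Module.End R L)

@[simp] lemma brkt_apply {R L : Type*} [CommRing R] [LieRing L] [LieAlgebra R L] (x y : L) :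
    brkt R L x y = ⁅x, y⁆ := rfl

section Graded

variable {R : Type*} [CommRing R] {L : Type*} [LieRing L] [LieAlgebra R L]

lemma lieIdeal_toSubmodule_eq_map₂ (I J : LieIdeal R L) :
    (⁅I, J⁆ : LieIdeal R L).toSubmodule =
      Submodule.map₂ (brkt R L) I.toSubmodule J.toSubmodule := by
  rw [LieSubmodule.lieIdeal_oper_eq_linear_span', Submodule.map₂_eq_span_image2]
  congr 1

lemma aux1 (M : ℕ → Submodule R L) (hinternal : DirectSum.IsInternal M) (hM0 : M 0 = ⊥)
    (hgrade : ∀ i j, ∀ x ∈ M i, ∀ y ∈ M j, ⁅x, y⁆ ∈ M (i + j)) :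
    (LieAlgebra.derivedSeries R L 2).toSubmodule ⊓ M 4 ≤
      Submodule.map₂ (brkt R L) (Submodule.map₂ (brkt R L) (M 1) (M 1))
        (Submodule.map₂ (brkt R L) (M 1) (M 1)) := by
  classical
  set b := brkt R L with hb
  set P : ℕ → ℕ → Submodule R L := fun i j => Submodule.map₂ b (M i) (M j) with hP
  set Q : ℕ → ℕ → ℕ → ℕ → Submodule R L := fun i j k l => Submodule.map₂ b (P i j) (P k l)
    with hQ
  have hPle : ∀ i j, P i j ≤ M (i + j) := fun i j =>
    Submodule.map₂_le.mpr fun x hx y hy => hgrade i j x hx y hy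
  have hQle : ∀ i j k l, Q i j k l ≤ M (i + j + k + l) := by
    intro i j k l
    refine Submodule.map₂_le.mpr fun x hx y hy => ?_
    have := hgrade (i + j) (k + l) x (hPle i j hx) y (hPle k l hy)
    simpa [hb, show i + j + (k + l) = i + j + k + l by omega] using this
  -- the second derived algebra as a supremum of homogeneous pieces
  have hD1 : (LieAlgebra.derivedSeries R L 1).toSubmodule =
      ⨆ i, ⨆ j, P i j := by
    have : LieAlgebra.derivedSeries R L 1 = ⁅(⊤ : LieIdeal R L), (⊤ : LieIdeal R L)⁆ := by
      rw [LieAlgebra.derivedSeries_def, LieAlgebra.derivedSeriesOfIdeal_succ,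
        LieAlgebra.derivedSeriesOfIdeal_zero]
    rw [this, lieIdeal_toSubmodule_eq_map₂]
    have htop : (⊤ : LieIdeal R L).toSubmodule = ⨆ i, M i := by
      rw [hinternal.submodule_iSup_eq_top]; rfl
    rw [htop, Submodule.map₂_iSup_left]
    exact iSup_congr fun i => Submodule.map₂_iSup_right _ _ _
  have hD2 : (LieAlgebra.derivedSeries R L 2).toSubmodule =
      ⨆ i, ⨆ j, ⨆ k, ⨆ l, Q i j k l := by
    have h2 : LieAlgebra.derivedSeries R L 2 =
        ⁅LieAlgebra.derivedSeries R L 1, LieAlgebra.derivedSeries R L 1⁆ := by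
      rw [LieAlgebra.derivedSeries_def, LieAlgebra.derivedSeriesOfIdeal_succ,
        ← LieAlgebra.derivedSeries_def]
    rw [h2, lieIdeal_toSubmodule_eq_map₂, hD1, Submodule.map₂_iSup_left]
    refine iSup_congr fun i => ?_
    rw [Submodule.map₂_iSup_left]
    refine iSup_congr fun j => ?_
    rw [Submodule.map₂_iSup_right]
    exact iSup_congr fun k => Submodule.map₂_iSup_right _ _ _
  -- the projection onto M 4
  set e := LinearEquiv.ofBijective (DirectSum.coeLinearMap M) hinternal with he
  set π : L →ₗ[R] L :=
    (M 4).subtype ∘ₗ (DirectSum.component R ℕ (fun i => M i) 4) ∘ₗ e.symm.toLinearMap with hπ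
  have hπid : ∀ z ∈ M 4, π z = z := by
    intro z hz
    show ((e.symm z) 4 : L) = z
    rw [hinternal.ofBijective_coeLinearMap_of_mem hz]
  have hπ0 : ∀ s, s ≠ 4 → ∀ z ∈ M s, π z = 0 := by
    intro s hs z hz
    show ((e.symm z) 4 : L) = 0
    rw [hinternal.ofBijective_coeLinearMap_of_mem_ne hs hz]
    rfl
  rintro x ⟨hxN, hxM⟩
  have hm : x ∈ Submodule.map π ((LieAlgebra.derivedSeries R L 2).toSubmodule) :=
    ⟨x, hxN, hπid x hxM⟩
  rw [hD2] at hm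
  simp only [Submodule.map_iSup] at hm
  have hfin : (⨆ i, ⨆ j, ⨆ k, ⨆ l, Submodule.map π (Q i j k l)) ≤ Q 1 1 1 1 := by
    refine iSup_le fun i => iSup_le fun j => iSup_le fun k => iSup_le fun l => ?_
    by_cases h4 : i + j + k + l = 4
    · have hQ4 : Q i j k l ≤ M 4 := h4 ▸ hQle i j k l
      have h1 : Submodule.map π (Q i j k l) ≤ Q i j k l := by
        rintro y ⟨z, hz, rfl⟩
        rw [hπid z (hQ4 hz)]; exact hz
      refine h1.trans ?_
      rcases (by omega : (i = 1 ∧ j = 1 ∧ k = 1 ∧ l = 1) ∨ i = 0 ∨ j = 0 ∨ k = 0 ∨ l = 0) with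
        ⟨rfl, rfl, rfl, rfl⟩ | h | h | h | h <;>
        [exact le_rfl;
         (subst h;
          simp [hQ, hP, hM0, Submodule.map₂_bot_left, Submodule.map₂_bot_right, bot_le]);
         (subst h;
          simp [hQ, hP, hM0, Submodule.map₂_bot_left, Submodule.map₂_bot_right, bot_le]);
         (subst h;
          simp [hQ, hP, hM0, Submodule.map₂_bot_left, Submodule.map₂_bot_right, bot_le]);
         (subst h;
          simp [hQ, hP, hM0, Submodule.map₂_bot_left, Submodule.map₂_bot_right, bot_le])]
    · rintro y ⟨z, hz, rfl⟩
      rw [hπ0 _ h4 z (hQle i j k l hz)]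
      exact zero_mem _
  exact hfin hm

end Graded

section Finale

lemma aux2 {p : ℕ} [Fact p.Prime] (hp3 : p ≠ 3)
    {L : Type*} [LieRing L] [LieAlgebra (ZMod p) L]
    (M : ℕ → Submodule (ZMod p) L)
    (hgrade : ∀ i j, ∀ x ∈ M i, ∀ y ∈ M j, ⁅x, y⁆ ∈ M (i + j))
    (hdim1 : Module.finrank (ZMod p) (M 1) = 3)
    (hdim3 : Module.finrank (ZMod p) (M 3) = 1) :
    ∃ U : Submodule (ZMod p) L,
      Submodule.map₂ (brkt (ZMod p) L) (Submodule.map₂ (brkt (ZMod p) L) (M 1) (M 1))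
          (Submodule.map₂ (brkt (ZMod p) L) (M 1) (M 1)) ≤ U ∧
        Module.Finite (ZMod p) U ∧ Module.finrank (ZMod p) U ≤ 2 := by
  classical
  set K := ZMod p
  haveI : Module.Finite K (M 1) := Module.finite_of_finrank_pos (by rw [hdim1]; norm_num)
  haveI : Module.Finite K (M 3) := Module.finite_of_finrank_pos (by rw [hdim3]; norm_num)
  set b1 : Basis (Fin 3) K (M 1) := Module.finBasisOfFinrankEq K (M 1) hdim1 with hb1
  set b3 : Basis (Fin 1) K (M 3) := Module.finBasisOfFinrankEq K (M 3) hdim3 with hb3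
  set e : Fin 3 → L := fun i => (b1 i : L) with hedef
  have he : ∀ i, e i ∈ M 1 := fun i => (b1 i).2
  set t : L := (b3 0 : L) with htdef
  have htm : t ∈ M 3 := (b3 0).2
  have ht0 : t ≠ 0 := by
    simpa [htdef, Submodule.coe_eq_zero] using b3.ne_zero 0
  have hM1span : ∀ a ∈ M 1, a ∈ span K (Set.range e) := by
    intro a ha
    have h1 : (⟨a, ha⟩ : M 1) ∈ span K (Set.range b1) := by rw [b1.span_eq]; trivial
    have h2 : a ∈ Submodule.map (M 1).subtype (span K (Set.range b1)) := ⟨⟨a, ha⟩, h1, rfl⟩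
    rw [Submodule.map_span, ← Set.range_comp] at h2
    exact h2
  have hM3span : ∀ x ∈ M 3, ∃ cc : K, x = cc • t := by
    intro x hx
    have h1 : (⟨x, hx⟩ : M 3) ∈ span K (Set.range b3) := by rw [b3.span_eq]; trivial
    rw [show Set.range b3 = {b3 0} from Set.range_unique, Submodule.mem_span_singleton] at h1
    obtain ⟨cc, hcc⟩ := h1
    exact ⟨cc, by simpa using congrArg Subtype.val hcc.symm⟩
  have hcancel : ∀ a : K, a • t = 0 → a = 0 := by
    intro a h
    rcases smul_eq_zero.mp h with h | h
    · exact h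
    · exact absurd h ht0
  have hbr3 : ∀ i j k, ⁅e i, ⁅e j, e k⁆⁆ ∈ M 3 := by
    intro i j k
    have h2 : ⁅e j, e k⁆ ∈ M 2 := hgrade 1 1 _ (he j) _ (he k)
    simpa using hgrade 1 2 _ (he i) _ h2
  choose c hc using fun i j k => hM3span _ (hbr3 i j k)
  set v : Fin 3 → L := fun i => ⁅e i, t⁆ with hvdef
  by_cases hv : LinearIndependent K v
  · -- independent case: all brackets vanish
    refine ⟨⊥, ?_, inferInstance, by simp⟩
    -- coefficient relations
    have hE : ∀ i j k l, c j k l • v i - c i k l • v j + (c l i j • v k - c k i j • v l) = 0 := by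
      intro i j k l
      have h1 : ⁅⁅e i, e j⁆, ⁅e k, e l⁆⁆ = c j k l • v i - c i k l • v j := by
        rw [lie_lie, hc j k l, hc i k l, lie_smul, lie_smul]
      have h2 : ⁅⁅e k, e l⁆, ⁅e i, e j⁆⁆ = c l i j • v k - c k i j • v l := by
        rw [lie_lie, hc l i j, hc k i j, lie_smul, lie_smul]
      have h3 : ⁅⁅e i, e j⁆, ⁅e k, e l⁆⁆ = -⁅⁅e k, e l⁆, ⁅e i, e j⁆⁆ := (lie_skew _ _).symm
      rw [h1, h2] at h3
      rw [h3]
      abel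
    have hind := Fintype.linearIndependent_iff.mp hv
    have ext_eq : ∀ g0 g1 g2 : K, (g0 • v 0 + g1 • v 1 + g2 • v 2 = 0) →
        g0 = 0 ∧ g1 = 0 ∧ g2 = 0 := by
      intro g0 g1 g2 hg
      have hs : ∑ m, (![g0, g1, g2]) m • v m = 0 := by
        rw [Fin.sum_univ_three]
        simpa using hg
      have h := hind ![g0, g1, g2] hs
      exact ⟨by simpa using h 0, by simpa using h 1, by simpa using h 2⟩
    have hcancel2 : ∀ a b : K, a • t = b • t → a = b := by
      intro a b h
      have := hcancel (a - b) (by rw [sub_smul, h, sub_self])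
      exact sub_eq_zero.mp this
    have hswap : ∀ i j k, c i j k = -c i k j := by
      intro i j k
      refine hcancel2 _ _ ?_
      rw [neg_smul, ← hc i j k, ← hc i k j, ← lie_neg, lie_skew]
    have hdiag : ∀ i j, c i j j = 0 := by
      intro i j
      apply hcancel
      rw [← hc i j j, lie_self, lie_zero]
    have hA := ext_eq (c 1 0 2 + c 2 0 1) (-c 0 0 2) (-c 0 0 1)
      (by linear_combination (norm := module) hE 0 1 0 2)
    have hB := ext_eq (c 1 1 2) (c 2 0 1 - c 0 1 2) (-c 1 0 1)
      (by linear_combination (norm := module) hE 0 1 1 2)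
    have hC := ext_eq (c 2 1 2) (c 2 0 2) (-(c 0 1 2 + c 1 0 2))
      (by linear_combination (norm := module) hE 0 2 1 2)
    have h002 : c 0 0 2 = 0 := by have := hA.2.1; simpa [neg_eq_zero] using this
    have h001 : c 0 0 1 = 0 := by have := hA.2.2; simpa [neg_eq_zero] using this
    have h102 : c 1 0 2 = -c 2 0 1 := by
      have := hA.1; linear_combination this
    have h112 : c 1 1 2 = 0 := hB.1
    have h101 : c 1 0 1 = 0 := by have := hB.2.2; simpa [neg_eq_zero] using this
    have h012 : c 0 1 2 = c 2 0 1 := by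
      have := hB.2.1; linear_combination -this
    have h212 : c 2 1 2 = 0 := hC.1
    have h202 : c 2 0 2 = 0 := hC.2.1
    have hjac : ⁅e 0, ⁅e 1, e 2⁆⁆ + ⁅e 1, ⁅e 2, e 0⁆⁆ + ⁅e 2, ⁅e 0, e 1⁆⁆ = 0 :=
      lie_jacobi (e 0) (e 1) (e 2)
    have hsumc : c 0 1 2 + c 1 2 0 + c 2 0 1 = 0 := by
      apply hcancel
      rw [add_smul, add_smul, ← hc, ← hc, ← hc]
      exact hjac
    have h120 : c 1 2 0 = c 2 0 1 := by
      rw [hswap 1 2 0, h102]; ring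
    have h3ne : (3 : K) ≠ 0 := by
      have h3 : ((3 : ℕ) : ZMod p) ≠ 0 := by
        rw [Ne, ZMod.natCast_eq_zero_iff]
        intro hdvd
        exact hp3 ((Nat.prime_dvd_prime_iff_eq Fact.out Nat.prime_three).mp hdvd)
      simpa using h3
    have h201 : c 2 0 1 = 0 := by
      have h3 : (3 : K) * c 2 0 1 = 0 := by linear_combination hsumc - h012 - h120
      exact (mul_eq_zero.mp h3).resolve_left h3ne
    have h012' : c 0 1 2 = 0 := by rw [h012, h201]
    have h102' : c 1 0 2 = 0 := by rw [h102, h201, neg_zero]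
    have hcz : ∀ i j k, c i j k = 0 := by
      intro i j k
      fin_cases i <;> fin_cases j <;> fin_cases k <;>
        first
        | exact hdiag _ _
        | exact h001 | exact h101 | exact h201 | exact h002 | exact h102' | exact h202
        | exact h012' | exact h112 | exact h212
        | (rw [hswap, neg_eq_zero]
           first
           | exact h001 | exact h101 | exact h201 | exact h002 | exact h102' | exact h202
           | exact h012' | exact h112 | exact h212)
    have hbz : ∀ i j k, ⁅e i, ⁅e j, e k⁆⁆ = 0 := by
      intro i j k
      rw [hc, hcz, zero_smul]
    have h3a : ∀ i j, ∀ d ∈ M 1, ⁅e i, ⁅e j, d⁆⁆ = 0 := by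
      intro i j d hd
      have hker : span K (Set.range e) ≤
          LinearMap.ker ((brkt K L (e i)) ∘ₗ (brkt K L (e j))) := by
        rw [Submodule.span_le]
        rintro _ ⟨k, rfl⟩
        simp [LinearMap.mem_ker, hbz i j k]
      simpa using hker (hM1span d hd)
    have h3b : ∀ i, ∀ a ∈ M 1, ∀ d ∈ M 1, ⁅e i, ⁅a, d⁆⁆ = 0 := by
      intro i a ha d hd
      have hker : span K (Set.range e) ≤
          LinearMap.ker ((brkt K L (e i)) ∘ₗ ((brkt K L).flip d)) := by
        rw [Submodule.span_le]
        rintro _ ⟨j, rfl⟩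
        simp [LinearMap.mem_ker, h3a i j d hd]
      simpa using hker (hM1span a ha)
    have h3c : ∀ i, ∀ w ∈ Submodule.map₂ (brkt K L) (M 1) (M 1), ⁅e i, w⁆ = 0 := by
      intro i w hw
      have hle : Submodule.map₂ (brkt K L) (M 1) (M 1) ≤ LinearMap.ker (brkt K L (e i)) :=
        Submodule.map₂_le.mpr fun a ha d hd => by simp [LinearMap.mem_ker, h3b i a ha d hd]
      simpa using hle hw
    have h3d : ∀ a ∈ M 1, ∀ w ∈ Submodule.map₂ (brkt K L) (M 1) (M 1), ⁅a, w⁆ = 0 := by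
      intro a ha w hw
      have hker : span K (Set.range e) ≤ LinearMap.ker ((brkt K L).flip w) := by
        rw [Submodule.span_le]
        rintro _ ⟨i, rfl⟩
        simp [LinearMap.mem_ker, h3c i w hw]
      simpa using hker (hM1span a ha)
    refine Submodule.map₂_le.mpr fun u hu w hw => ?_
    have hle : Submodule.map₂ (brkt K L) (M 1) (M 1) ≤ LinearMap.ker ((brkt K L).flip w) := by
      refine Submodule.map₂_le.mpr fun a ha d hd => ?_
      simp only [LinearMap.mem_ker, LinearMap.flip_apply, brkt_apply]
      rw [lie_lie, h3d a ha w hw, h3d d hd w hw, lie_zero, lie_zero, sub_zero]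
    have : ⁅u, w⁆ = 0 := by simpa using hle hu
    simpa [Submodule.mem_bot] using this
  · -- dependent case
    set U : Submodule K L := span K (Set.range v) with hU
    have hUa : ∀ a ∈ M 1, ∀ x ∈ M 3, ⁅a, x⁆ ∈ U := by
      intro a ha x hx
      obtain ⟨cc, rfl⟩ := hM3span x hx
      rw [lie_smul]
      refine Submodule.smul_mem _ _ ?_
      have hsub : span K (Set.range e) ≤ Submodule.comap ((brkt K L).flip t) U := by
        rw [Submodule.span_le]
        rintro _ ⟨i, rfl⟩
        exact Submodule.subset_span ⟨i, rfl⟩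
      exact hsub (hM1span a ha)
    have hW2M2 : Submodule.map₂ (brkt K L) (M 1) (M 1) ≤ M 2 :=
      Submodule.map₂_le.mpr fun a ha d hd => hgrade 1 1 a ha d hd
    refine ⟨U, ?_, FiniteDimensional.span_of_finite _ (Set.finite_range v), ?_⟩
    · refine Submodule.map₂_le.mpr fun u hu w hw => ?_
      have hcom : Submodule.map₂ (brkt K L) (M 1) (M 1) ≤
          Submodule.comap ((brkt K L).flip w) U := by
        refine Submodule.map₂_le.mpr fun a ha d hd => ?_
        simp only [Submodule.mem_comap, LinearMap.flip_apply, brkt_apply]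
        rw [lie_lie]
        exact sub_mem (hUa a ha _ (hgrade 1 2 d hd w (hW2M2 hw)))
          (hUa d hd _ (hgrade 1 2 a ha w (hW2M2 hw)))
      simpa using hcom hu
    · have h1 : ¬ (Fintype.card (Fin 3) = (Set.range v).finrank K) :=
        fun h => hv (linearIndependent_iff_card_eq_finrank_span.mpr h)
      have h2 : (Set.range v).finrank K ≤ 3 := by
        simpa using finrank_range_le_card v
      simp only [Fintype.card_fin] at h1
      show (Set.range v).finrank K ≤ 2
      omega

end Finale

theorem second_derived_inter_degree_four_dim_le_two
    {p : ℕ} [Fact p.Prime] (hp3 : p ≠ 3)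
    {L : Type*} [LieRing L] [LieAlgebra (ZMod p) L]
    (M : ℕ → Submodule (ZMod p) L)
    (hinternal : DirectSum.IsInternal M)
    (hM0 : M 0 = ⊥)
    (hgrade : ∀ i j, ∀ x ∈ M i, ∀ y ∈ M j, ⁅x, y⁆ ∈ M (i + j))
    (hgen : LieSubalgebra.lieSpan (ZMod p) L (M 1 : Set L) = ⊤)
    (hdim1 : Module.finrank (ZMod p) (M 1) = 3)
    (hdim3 : Module.finrank (ZMod p) (M 3) = 1) :
    Module.finrank (ZMod p)
      ((LieAlgebra.derivedSeries (ZMod p) L 2).toSubmodule ⊓ M 4 : Submodule (ZMod p) L) ≤ 2 := by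
  obtain ⟨U, hle, hfin, hrk⟩ := aux2 hp3 M hgrade hdim1 hdim3
  have h1 := aux1 M hinternal hM0 hgrade
  haveI := hfin
  exact le_trans (Submodule.finrank_mono (le_trans h1 hle)) hrk
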